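/- For μ ∈ Γ_{k−1} ⊂ ℝⁿ and each index i, σ_{k−1}(μ|i)·σ_{k−1}(μ) − σ_k(μ)·σ_{k−2}(μ|i) ≥ (n/(k(n−k+1)))·σ_{k−1}(μ|i)², where (μ|i) denotes the vector μ with the i-th entry deleted. In particular this quantity is nonnegative. -/

import Mathlib

open Finset

/-- The k-th elementary symmetric polynomial of x : Fin n -> R. -/
noncomputable def esymm (n k : ℕ) (x : Fin n → ℝ) : ℝ :=
  ∑ s ∈ Finset.univ.powersetCard k, ∏ i ∈ s, x i

/-- The Garding cone Gamma_k. -/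
def Gamma (n k : ℕ) : Set (Fin n → ℝ) :=
  {x | ∀ j, 1 ≤ j → j ≤ k → 0 < esymm n j x}

/-- The k-th elementary symmetric polynomial of x with the i-th entry deleted. -/
noncomputable def esymmDel (n k : ℕ) (x : Fin n → ℝ) (i : Fin n) : ℝ :=
  ∑ s ∈ (Finset.univ.erase i).powersetCard k, ∏ j ∈ s, x j

section Aux

open Polynomial

lemma mesymm_one (s : Multiset ℝ) : s.esymm 1 = s.sum := by
  simp [Multiset.esymm, Multiset.powersetCard_one, Multiset.map_map, Function.comp_def]

lemma mesymm_eq_zero {s : Multiset ℝ} {j : ℕ} (h : Multiset.card s < j) : s.esymm j = 0 := by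
  simp [Multiset.esymm, Multiset.powersetCard_eq_empty _ h]
lemma mesymm_zero (s : Multiset ℝ) : s.esymm 0 = 1 := by simp [Multiset.esymm]
lemma mesymm_cons (a : ℝ) (s : Multiset ℝ) (j : ℕ) :
    (a ::ₘ s).esymm (j + 1) = s.esymm (j + 1) + a * s.esymm j := by
  simp [Multiset.esymm, Multiset.powersetCard_cons, Multiset.map_map, Function.comp_def,
    Multiset.sum_map_mul_left]
lemma mesymm_card (s : Multiset ℝ) : s.esymm (Multiset.card s) = s.prod := by
  induction s using Multiset.induction with
  | empty => simp [mesymm_zero]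
  | cons a s ih =>
    rw [Multiset.card_cons, mesymm_cons, mesymm_eq_zero (by omega), ih]; simp

lemma mesymm_inv (s : Multiset ℝ) (h0 : ∀ x ∈ s, x ≠ 0) :
    ∀ j ≤ Multiset.card s,
      (s.map fun x => x⁻¹).esymm j * s.prod = s.esymm (Multiset.card s - j) := by
  induction s using Multiset.induction with
  | empty =>
    intro j hj
    obtain rfl : j = 0 := Nat.le_zero.mp (by simpa using hj)
    simp [mesymm_zero]
  | cons a s ih =>
    have ha : a ≠ 0 := h0 a (Multiset.mem_cons_self a s)
    have h0s : ∀ x ∈ s, x ≠ 0 := fun x hx => h0 x (Multiset.mem_cons_of_mem hx)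
    intro j hj
    rw [Multiset.card_cons] at hj
    match j with
    | 0 =>
      simp only [mesymm_zero, one_mul, Multiset.card_cons, Nat.sub_zero]
      rw [show Multiset.card s + 1 = Multiset.card (a ::ₘ s) by simp, mesymm_card]
    | (jj+1) =>
      rw [Multiset.map_cons, mesymm_cons, Multiset.prod_cons, Multiset.card_cons]
      rcases Nat.lt_or_ge jj (Multiset.card s) with hlt | hge
      · have e1 := ih h0s (jj+1) (by omega)
        have e2 := ih h0s jj (by omega)
        have hcc : Multiset.card s - jj = (Multiset.card s - (jj+1)) + 1 := by omega
        have hcc2 : Multiset.card s + 1 - (jj + 1) = (Multiset.card s - (jj+1)) + 1 := by omega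
        rw [hcc] at e2
        rw [hcc2, mesymm_cons]
        have expand : ((s.map fun x => x⁻¹).esymm (jj + 1) + a⁻¹ * (s.map fun x => x⁻¹).esymm jj) *
              (a * s.prod)
            = a * ((s.map fun x => x⁻¹).esymm (jj+1) * s.prod)
              + (a⁻¹ * a) * ((s.map fun x => x⁻¹).esymm jj * s.prod) := by ring
        rw [expand, inv_mul_cancel₀ ha, one_mul, e1, e2]
        ring
      · have hje : jj = Multiset.card s := by omega
        subst hje
        have e2 := ih h0s (Multiset.card s) le_rfl
        rw [Nat.sub_self, mesymm_zero] at e2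
        have hz : (s.map fun x => x⁻¹).esymm (Multiset.card s + 1) = 0 :=
          mesymm_eq_zero (by simp)
        rw [show Multiset.card s + 1 - (Multiset.card s + 1) = 0 by omega, mesymm_zero, hz]
        have expand : (0 + a⁻¹ * (s.map fun x => x⁻¹).esymm (Multiset.card s)) * (a * s.prod)
            = (a⁻¹ * a) * ((s.map fun x => x⁻¹).esymm (Multiset.card s) * s.prod) := by ring
        rw [expand, inv_mul_cancel₀ ha, e2]
        ring

lemma mesymm_deriv (s : Multiset ℝ) (m : ℕ) (hs : Multiset.card s = m) (hm : 1 ≤ m) :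
    ∃ w : Multiset ℝ, Multiset.card w = m - 1 ∧
      ∀ j, j ≤ m - 1 → (m : ℝ) * w.esymm j = ((m : ℝ) - j) * s.esymm j := by
  set f : ℝ[X] := (s.map fun r => X + C r).prod with hf
  have hfm : f.Monic := monic_multiset_prod_of_monic _ _ fun r _ => monic_X_add_C r
  have hmono : ∀ p ∈ s.map fun r => (X + C r : ℝ[X]), p.Monic := by
    intro p hp
    obtain ⟨r, _, rfl⟩ := Multiset.mem_map.mp hp
    exact monic_X_add_C r
  have hdeg : f.natDegree = m := by
    rw [hf, natDegree_multiset_prod_of_monic _ hmono, Multiset.map_map]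
    have : (s.map (Polynomial.natDegree ∘ fun r => (X + C r : ℝ[X]))) = s.map fun _ => 1 :=
      Multiset.map_congr rfl fun x _ => natDegree_X_add_C x
    rw [this]
    simp [hs]
  have hroots : f.roots = s.map fun r => -r := by
    have h1 : (s.map fun r => (X + C r : ℝ[X])) = ((s.map fun r => -r).map fun a => X - C a) := by
      rw [Multiset.map_map]
      exact Multiset.map_congr rfl fun x _ => by simp [sub_neg_eq_add]
    rw [hf, h1, roots_multiset_prod_X_sub_C]
  have hcard : Multiset.card f.roots = m := by rw [hroots, Multiset.card_map, hs]
  set g : ℝ[X] := derivative f with hg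
  have hcast : ((m - 1 : ℕ) : ℝ) + 1 = (m : ℝ) := by
    rw [Nat.cast_sub hm]; ring
  have hfcm : f.coeff m = 1 := by rw [← hdeg]; exact hfm.coeff_natDegree
  have hg1 : g.coeff (m - 1) = (m : ℝ) := by
    rw [hg, coeff_derivative, show m - 1 + 1 = m from by omega, hfcm, one_mul, hcast]
  have hgne : g.coeff (m - 1) ≠ 0 := by
    rw [hg1]; exact Nat.cast_ne_zero.mpr (by omega)
  have hgdeg : g.natDegree = m - 1 :=
    le_antisymm (le_trans (natDegree_derivative_le f) (by omega)) (le_natDegree_of_ne_zero hgne)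
  have hgroots : Multiset.card g.roots = m - 1 := by
    have h1 : Multiset.card g.roots ≤ m - 1 := hgdeg ▸ card_roots' g
    have h2 := card_roots_le_derivative f
    rw [← hg] at h2
    omega
  have hsplit : Splits g := splits_iff_card_roots.mpr (by rw [hgroots, hgdeg])
  have hglc : g.leadingCoeff = (m : ℝ) := by rw [leadingCoeff, hgdeg, hg1]
  have hgeq := hsplit.eq_prod_roots
  rw [hglc] at hgeq
  refine ⟨g.roots.map fun x => -x, by rw [Multiset.card_map, hgroots], ?_⟩
  set w : Multiset ℝ := g.roots.map fun x => -x with hw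
  have hcw : Multiset.card w = m - 1 := by rw [hw, Multiset.card_map, hgroots]
  have hwprod : (w.map fun r => (X + C r : ℝ[X])).prod = (g.roots.map fun a => X - C a).prod := by
    rw [hw, Multiset.map_map]
    exact congrArg _ (Multiset.map_congr rfl fun x _ => by simp [sub_eq_add_neg])
  intro j hj
  have h1 : g.coeff (m - 1 - j) = (m : ℝ) * w.esymm j := by
    conv_lhs => rw [hgeq]
    rw [coeff_C_mul, ← hwprod, Multiset.prod_X_add_C_coeff w (by omega : m - 1 - j ≤ _ )]
    · rw [hcw, show m - 1 - (m - 1 - j) = j from by omega]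
  have h2 : g.coeff (m - 1 - j) = s.esymm j * ((m : ℝ) - j) := by
    rw [hg, coeff_derivative, show m - 1 - j + 1 = m - j from by omega, hf,
      Multiset.prod_X_add_C_coeff s (by omega : m - j ≤ _)]
    · rw [hs, show m - (m - j) = j from by omega]
      congr 1
      rw [Nat.cast_sub (by omega), Nat.cast_sub (by omega)]
      push_cast
      ring
  rw [← h1, h2]
  ring

theorem newton_ineq (m : ℕ) : ∀ s : Multiset ℝ, Multiset.card s = m →
    ∀ k : ℕ, 2 ≤ k → k ≤ m →
    (k : ℝ) * ((m : ℝ) - k + 2) * (s.esymm k * s.esymm (k - 2)) ≤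
      ((k : ℝ) - 1) * ((m : ℝ) - k + 1) * s.esymm (k - 1) ^ 2 := by
  induction m using Nat.strong_induction_on with
  | _ m IH =>
  have key : ∀ s : Multiset ℝ, Multiset.card s = m → ∀ k : ℕ, 2 ≤ k → k < m →
      (k : ℝ) * ((m : ℝ) - k + 2) * (s.esymm k * s.esymm (k - 2)) ≤
      ((k : ℝ) - 1) * ((m : ℝ) - k + 1) * s.esymm (k - 1) ^ 2 := by
    intro s hs k hk2 hkm
    obtain ⟨w, hw, hwe⟩ := mesymm_deriv s m hs (by omega)
    have hM1 : ((m - 1 : ℕ) : ℝ) = (m : ℝ) - 1 := by rw [Nat.cast_sub (by omega)]; norm_num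
    have IHw := IH (m - 1) (by omega) w hw k hk2 (by omega)
    rw [hM1] at IHw
    have e1 : (m : ℝ) * w.esymm k = ((m : ℝ) - k) * s.esymm k := hwe k (by omega)
    have e2 := hwe (k - 1) (by omega)
    have e3 := hwe (k - 2) (by omega)
    have ck1 : ((k - 1 : ℕ) : ℝ) = (k : ℝ) - 1 := by rw [Nat.cast_sub (by omega)]; norm_num
    have ck2 : ((k - 2 : ℕ) : ℝ) = (k : ℝ) - 2 := by rw [Nat.cast_sub (by omega)]; norm_num
    rw [ck1] at e2
    rw [ck2] at e3
    have hM : (0 : ℝ) < m := Nat.cast_pos.mpr (by omega)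
    have hMK : (0 : ℝ) < (m : ℝ) - k := by
      have : (k : ℝ) < m := by exact_mod_cast hkm
      linarith
    have hMK1 : (0 : ℝ) < (m : ℝ) - k + 1 := by linarith
    have a1 : w.esymm k = ((m : ℝ) - k) * s.esymm k / m := by
      rw [eq_div_iff hM.ne']; linear_combination e1
    have a2 : w.esymm (k - 1) = ((m : ℝ) - k + 1) * s.esymm (k - 1) / m := by
      rw [eq_div_iff hM.ne']; linear_combination e2
    have a3 : w.esymm (k - 2) = ((m : ℝ) - k + 2) * s.esymm (k - 2) / m := by
      rw [eq_div_iff hM.ne']; linear_combination e3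
    have h3 : ((m:ℝ) - k) * ((m:ℝ) - k + 1) *
        ((k : ℝ) * ((m : ℝ) - k + 2) * (s.esymm k * s.esymm (k - 2))) ≤
        ((m:ℝ) - k) * ((m:ℝ) - k + 1) *
        (((k : ℝ) - 1) * ((m : ℝ) - k + 1) * s.esymm (k - 1) ^ 2) := by
      calc ((m:ℝ) - k) * ((m:ℝ) - k + 1) *
            ((k : ℝ) * ((m : ℝ) - k + 2) * (s.esymm k * s.esymm (k - 2)))
          = (m:ℝ)^2 * ((k : ℝ) * ((m : ℝ) - 1 - k + 2) * (w.esymm k * w.esymm (k - 2))) := by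
            rw [a1, a3]; field_simp; ring
        _ ≤ (m:ℝ)^2 * (((k : ℝ) - 1) * ((m : ℝ) - 1 - k + 1) * w.esymm (k - 1) ^ 2) :=
            mul_le_mul_of_nonneg_left IHw (by positivity)
        _ = _ := by rw [a2]; field_simp; ring
    exact le_of_mul_le_mul_left h3 (mul_pos hMK hMK1)
  intro s hs k hk2 hkm
  rcases Nat.lt_or_ge k m with h | h
  · exact key s hs k hk2 h
  · have hkem : k = m := by omega
    subst hkem
    rcases Nat.lt_or_ge 2 k with h3 | h3
    · -- k = m ≥ 3
      by_cases h0 : ∃ x ∈ s, x = 0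
      · obtain ⟨x, hx, rfl⟩ := h0
        have hpz : s.esymm k = 0 := by rw [← hs, mesymm_card]; exact Multiset.prod_eq_zero hx
        rw [hpz]
        have hk1 : (1 : ℝ) ≤ (k : ℝ) := by exact_mod_cast (by omega : 1 ≤ k)
        nlinarith [sq_nonneg (s.esymm (k - 1))]
      · push_neg at h0
        set t : Multiset ℝ := s.map fun x => x⁻¹ with ht
        have hct : Multiset.card t = k := by rw [ht, Multiset.card_map, hs]
        have htk := key t hct 2 le_rfl h3
        have i1 := mesymm_inv s h0 1 (by omega)
        have i2 := mesymm_inv s h0 2 (by omega)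
        rw [hs] at i1 i2
        have hP : s.esymm k = s.prod := by rw [← hs, mesymm_card]
        norm_num [mesymm_zero] at htk
        -- htk : 2 * ((k:ℝ) - 2 + 2) * t.esymm 2 ≤ ((k:ℝ) - 2 + 1) * t.esymm 1 ^ 2  (roughly)
        have h2 := mul_le_mul_of_nonneg_left htk (sq_nonneg s.prod)
        calc (k:ℝ) * ((k:ℝ) - (k:ℝ) + 2) * (s.esymm k * s.esymm (k - 2))
            = s.prod ^ 2 * (2 * (k:ℝ) * t.esymm 2) := by
              rw [hP, ← i2]; ring
          _ ≤ s.prod ^ 2 * (((k:ℝ) - 2 + 1) * t.esymm 1 ^ 2) := h2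
          _ = ((k:ℝ) - 1) * ((k:ℝ) - (k:ℝ) + 1) * s.esymm (k - 1) ^ 2 := by
              rw [← i1]; ring
    · -- k = m = 2
      have hk : k = 2 := by omega
      subst hk
      obtain ⟨a, b, rfl⟩ := Multiset.card_eq_two.mp hs
      have hprod : ({a, b} : Multiset ℝ).esymm 2 = a * b := by
        rw [show (2:ℕ) = Multiset.card ({a, b} : Multiset ℝ) from by simp, mesymm_card]
        simp
      have hsum : ({a, b} : Multiset ℝ).esymm 1 = a + b := by rw [mesymm_one]; simp
      rw [show (2:ℕ) - 2 = 0 from rfl, show (2:ℕ) - 1 = 1 from rfl, hprod, hsum, mesymm_zero]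
      norm_num
      nlinarith [sq_nonneg (a - b)]

lemma esymm_split (n : ℕ) (μ : Fin n → ℝ) (i : Fin n) (j : ℕ) (hj : 1 ≤ j) :
    esymm n j μ = esymmDel n j μ i + μ i * esymmDel n (j - 1) μ i := by
  classical
  obtain ⟨jj, rfl⟩ : ∃ jj, j = jj + 1 := ⟨j - 1, by omega⟩
  have hu : (Finset.univ : Finset (Fin n)) = insert i (Finset.univ.erase i) :=
    (Finset.insert_erase (Finset.mem_univ i)).symm
  have step : (Finset.univ.powersetCard (jj + 1) : Finset (Finset (Fin n))) =
      (Finset.univ.erase i).powersetCard (jj + 1) ∪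
        ((Finset.univ.erase i).powersetCard jj).image (insert i) := by
    conv_lhs => rw [hu]
    exact Finset.powersetCard_succ_insert (Finset.notMem_erase i _) jj
  have hdisj : Disjoint ((Finset.univ.erase i).powersetCard (jj + 1))
      (((Finset.univ.erase i).powersetCard jj).image (insert i)) := by
    rw [Finset.disjoint_left]
    intro t ht1 ht2
    rw [Finset.mem_powersetCard] at ht1
    obtain ⟨t', _, rfl⟩ := Finset.mem_image.mp ht2
    exact (Finset.mem_erase.mp (ht1.1 (Finset.mem_insert_self i t'))).1 rfl
  have hinj : ∀ t1 ∈ (Finset.univ.erase i).powersetCard jj,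
      ∀ t2 ∈ (Finset.univ.erase i).powersetCard jj, insert i t1 = insert i t2 → t1 = t2 := by
    intro t1 h1 t2 h2 he
    rw [Finset.mem_powersetCard] at h1 h2
    have k1 : i ∉ t1 := fun hi => (Finset.mem_erase.mp (h1.1 hi)).1 rfl
    have k2 : i ∉ t2 := fun hi => (Finset.mem_erase.mp (h2.1 hi)).1 rfl
    rw [← Finset.erase_insert k1, ← Finset.erase_insert k2, he]
  simp only [esymm, esymmDel]
  rw [step, Finset.sum_union hdisj, Finset.sum_image hinj, Nat.add_sub_cancel]
  congr 1
  rw [Finset.mul_sum]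
  refine Finset.sum_congr rfl fun t ht => ?_
  rw [Finset.mem_powersetCard] at ht
  have hit : i ∉ t := fun hi => (Finset.mem_erase.mp (ht.1 hi)).1 rfl
  rw [Finset.prod_insert hit]

end Aux

/-- For mu in Gamma_{k-1}: sigma_{k-1}(mu|i) sigma_{k-1}(mu) - sigma_k(mu) sigma_{k-2}(mu|i)
is at least (n/(k(n-k+1))) sigma_{k-1}(mu|i)^2, and in particular nonnegative. -/
theorem esymm_del_ineq (n k : ℕ) (hk : 2 ≤ k) (hkn : k ≤ n)
    (μ : Fin n → ℝ) (hμ : μ ∈ Gamma n (k - 1)) (i : Fin n) :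
    (n : ℝ) / ((k : ℝ) * ((n : ℝ) - (k : ℝ) + 1)) * (esymmDel n (k - 1) μ i) ^ 2 ≤
      esymmDel n (k - 1) μ i * esymm n (k - 1) μ - esymm n k μ * esymmDel n (k - 2) μ i ∧
    0 ≤ esymmDel n (k - 1) μ i * esymm n (k - 1) μ - esymm n k μ * esymmDel n (k - 2) μ i := by
  classical
  have hES : ∀ j : ℕ, esymmDel n j μ i = ((Finset.univ.erase i).val.map μ).esymm j := by
    intro j
    simp only [esymmDel]
    exact (Finset.esymm_map_val μ _ j).symm
  set S : Multiset ℝ := (Finset.univ.erase i).val.map μ with hSdef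
  have hS : Multiset.card S = n - 1 := by
    simp [hSdef, Finset.card_erase_of_mem (Finset.mem_univ i)]
  have hsub : esymmDel n (k - 1) μ i * esymm n (k - 1) μ - esymm n k μ * esymmDel n (k - 2) μ i
      = esymmDel n (k - 1) μ i ^ 2 - esymmDel n k μ i * esymmDel n (k - 2) μ i := by
    rw [esymm_split n μ i (k - 1) (by omega), esymm_split n μ i k (by omega),
      show k - 1 - 1 = k - 2 from by omega]
    ring
  have hN : (k : ℝ) * ((n : ℝ) - k + 1) * (esymmDel n k μ i * esymmDel n (k - 2) μ i) ≤
      ((k : ℝ) - 1) * ((n : ℝ) - k) * esymmDel n (k - 1) μ i ^ 2 := by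
    rcases Nat.lt_or_ge k n with hlt | hge
    · have hnn := newton_ineq (n - 1) S hS k hk (by omega)
      have cn : ((n - 1 : ℕ) : ℝ) = (n : ℝ) - 1 := by
        rw [Nat.cast_sub (by omega)]; norm_num
      rw [cn, ← hES k, ← hES (k - 2), ← hES (k - 1)] at hnn
      nlinarith [hnn]
    · have hke : k = n := by omega
      have hEk0 : esymmDel n k μ i = 0 := by
        simp only [esymmDel]
        rw [(Finset.powersetCard_eq_empty (n := k)).mpr (by
          rw [Finset.card_erase_of_mem (Finset.mem_univ i)]
          simp only [Finset.card_univ, Fintype.card_fin]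
          omega)]
        simp
      rw [hEk0, hke]
      ring_nf
      norm_num
  have hD : (0 : ℝ) < (k : ℝ) * ((n : ℝ) - k + 1) := by
    have h1 : (0 : ℝ) < (k : ℝ) := Nat.cast_pos.mpr (by omega)
    have h2 : (k : ℝ) ≤ n := Nat.cast_le.mpr hkn
    nlinarith
  have main1 : (n : ℝ) / ((k : ℝ) * ((n : ℝ) - (k : ℝ) + 1)) * (esymmDel n (k - 1) μ i) ^ 2 ≤
      esymmDel n (k - 1) μ i * esymm n (k - 1) μ - esymm n k μ * esymmDel n (k - 2) μ i := by
    rw [hsub, div_mul_eq_mul_div, div_le_iff₀ hD]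
    nlinarith [hN]
  refine ⟨main1, le_trans ?_ main1⟩
  have h0 : (0 : ℝ) ≤ (n : ℝ) / ((k : ℝ) * ((n : ℝ) - (k : ℝ) + 1)) :=
    div_nonneg (Nat.cast_nonneg n) hD.le
  positivity
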